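/- Boundary vertex estimate: let i₀ be a vertex with φ'(i₀) = z'_{i₀} ∈ D₁ having a neighbor j₁ with |φ'(j₁)| ≥ 1, so l'_{i₀j₁} ≥ 1 − |z'_{i₀}|. If both PL metrics on the triangle containing edge i₀j₁ satisfy the uniformly nondegenerate condition with constant ε (so the gradient estimate e^{(u_{i₀}−u_{j₁})/2} ≥ sin²ε holds when u_{i₀} ≤ u_{j₁}), sin ε ≤ 1/2, |z_{i₀}| ≤ 1/2, l_{i₀j₁} ≤ 2r with r = sin³ε/4, and u_{i₀} ≤ u_{j₁}, then e^{u^h_{i₀}} ≥ 1 where u^h_{i₀} = u_{i₀} + log((1−|z_{i₀}|²)/(1−|z'_{i₀}|²)). -/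

import Mathlib

open Real

/-- boundary vertex estimate: let `i₀` be a vertex with
`z'_{i₀} = φ'(i₀) ∈ D₁` having a neighbor `j₁` with `|φ'(j₁)| ≥ 1`, so
`l'_{i₀j₁} ≥ 1 − |z'_{i₀}|`. Assuming the gradient estimate
`e^{(u_{i₀}−u_{j₁})/2} ≥ sin²ε` (valid when `u_{i₀} ≤ u_{j₁}`, from the
uniformly nondegenerate condition on the triangle containing the edge),
`sin ε ≤ 1/2`, `|z_{i₀}| ≤ 1/2`, `l_{i₀j₁} ≤ 2r` with `r = sin³ε/4`, and
`u_{i₀} ≤ u_{j₁}`, then `e^{u^h_{i₀}} ≥ 1`, where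
`u^h_{i₀} = u_{i₀} + log((1−|z_{i₀}|²)/(1−|z'_{i₀}|²))`. -/
theorem stmt18 (ε r : ℝ) (zi0 zj1 zi0' zj1' : ℂ) (ui0 uj1 : ℝ)
    (hε : 0 < ε) (hsin : Real.sin ε ≤ 1 / 2) (hsinpos : 0 < Real.sin ε)
    (hr : r = Real.sin ε ^ 3 / 4)
    (hzi0' : ‖zi0'‖ < 1) (hzj1' : 1 ≤ ‖zj1'‖)
    (hconf : dist zi0' zj1' = Real.exp ((ui0 + uj1) / 2) * dist zi0 zj1)
    (hgrad : ui0 ≤ uj1 → Real.sin ε ^ 2 ≤ Real.exp ((ui0 - uj1) / 2))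
    (hu : ui0 ≤ uj1)
    (hzi0 : ‖zi0‖ ≤ 1 / 2)
    (hl : dist zi0 zj1 ≤ 2 * r) (hlpos : 0 < dist zi0 zj1) :
    1 ≤ Real.exp (ui0 +
      Real.log ((1 - ‖zi0‖ ^ 2) / (1 - ‖zi0'‖ ^ 2))) := by
  set a := ‖zi0‖
  set a' := ‖zi0'‖
  have ha'0 : 0 ≤ a' := norm_nonneg _
  have ha0 : 0 ≤ a := norm_nonneg _
  have hD : (0:ℝ) < 1 - a' ^ 2 := by nlinarith
  have hN : (0:ℝ) < 1 - a ^ 2 := by nlinarith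
  have hA : (0:ℝ) < (1 - a ^ 2) / (1 - a' ^ 2) := div_pos hN hD
  rw [Real.exp_add, Real.exp_log hA]
  have htri : 1 - a' ≤ dist zi0' zj1' := by
    have h1 : dist zj1' 0 ≤ dist zj1' zi0' + dist zi0' 0 := dist_triangle _ _ _
    simp only [dist_zero_right] at h1
    rw [dist_comm zj1' zi0'] at h1
    linarith
  have hE := hgrad hu
  have hEpos : 0 < Real.exp ((ui0 - uj1) / 2) := Real.exp_pos _
  have hCpos : 0 < Real.exp ((ui0 + uj1) / 2) := Real.exp_pos _
  have hsplit : Real.exp ui0 = Real.exp ((ui0 + uj1) / 2) * Real.exp ((ui0 - uj1) / 2) := by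
    rw [← Real.exp_add]; ring_nf
  rw [hsplit]
  set s := Real.sin ε
  set l := dist zi0 zj1
  set l' := dist zi0' zj1'
  set C := Real.exp ((ui0 + uj1) / 2)
  set E := Real.exp ((ui0 - uj1) / 2)
  have hCl : C * l = l' := hconf.symm
  have hl2 : l ≤ s ^ 3 / 2 := by rw [hr] at hl; linarith
  have h1 : (1 - a' ^ 2) * l ≤ (1 - a') * s ^ 3 := by
    nlinarith [mul_le_mul_of_nonneg_left hl2 (by linarith : (0:ℝ) ≤ 1 - a'),
      mul_nonneg (mul_nonneg (by linarith : (0:ℝ) ≤ 1 - a')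
        (by linarith : (0:ℝ) ≤ 1 - a')) hlpos.le]
  have h15 : (1 - a') * s ^ 3 ≤ (1 - a') * s ^ 2 * (3/4) := by
    nlinarith [mul_nonneg (mul_nonneg (by linarith : (0:ℝ) ≤ 1 - a') (sq_nonneg s))
      (by linarith : (0:ℝ) ≤ 3/4 - s)]
  have h2 : (1 - a') * s ^ 2 * (3/4) ≤ l' * E * (1 - a ^ 2) := by
    have ha : (1 - a') * s ^ 2 ≤ l' * E :=
      mul_le_mul htri hE (by positivity) (by linarith)
    have hb : (3:ℝ)/4 ≤ 1 - a ^ 2 := by nlinarith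
    have := mul_le_mul ha hb (by norm_num) (mul_nonneg dist_nonneg hEpos.le)
    linarith
  have heql : C * E * (1 - a ^ 2) * l = l' * E * (1 - a ^ 2) := by
    rw [← hCl]; ring
  have hmain : 1 - a' ^ 2 ≤ C * E * (1 - a ^ 2) := by
    refine le_of_mul_le_mul_right ?_ hlpos
    rw [heql]; linarith
  have heq : C * E * ((1 - a ^ 2) / (1 - a' ^ 2)) = C * E * (1 - a ^ 2) / (1 - a' ^ 2) := by
    ring
  rw [heq, le_div_iff₀ hD]
  linarith
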